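/- Let R be a commutative ring of stable range at most 4. If every unimodular 2×2 matrix over R is extendable (respectively, simply extendable), then for every a ∈ R every unimodular 2×2 matrix over R/Ra is extendable (respectively, simply extendable). -/

import Mathlib

open Matrix

lemma lift_unimodular {R : Type*} [CommRing R]
    (hsr4 : ∀ a₁ a₂ a₃ a₄ b : R, Ideal.span {a₁, a₂, a₃, a₄, b} = ⊤ →
      ∃ r₁ r₂ r₃ r₄ : R,
        Ideal.span {a₁ + b * r₁, a₂ + b * r₂, a₃ + b * r₃, a₄ + b * r₄} = ⊤)
    (a : R) (A : Matrix (Fin 2) (Fin 2) (R ⧸ Ideal.span {a}))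
    (hA : Ideal.span {A 0 0, A 0 1, A 1 0, A 1 1} = ⊤) :
    ∃ A' : Matrix (Fin 2) (Fin 2) R,
      Ideal.span {A' 0 0, A' 0 1, A' 1 0, A' 1 1} = ⊤ ∧
      ∀ i j, Ideal.Quotient.mk (Ideal.span {a}) (A' i j) = A i j := by
  set π := Ideal.Quotient.mk (Ideal.span ({a} : Set R)) with hπ
  have hsurj : Function.Surjective π := Ideal.Quotient.mk_surjective (I := Ideal.span ({a} : Set R))
  obtain ⟨x00, h00⟩ := hsurj (A 0 0)
  obtain ⟨x01, h01⟩ := hsurj (A 0 1)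
  obtain ⟨x10, h10⟩ := hsurj (A 1 0)
  obtain ⟨x11, h11⟩ := hsurj (A 1 1)
  have hπa : π a = 0 := by
    rw [hπ, Ideal.Quotient.eq_zero_iff_mem]
    exact Ideal.subset_span rfl
  have hItop : Ideal.span ({x00, x01, x10, x11, a} : Set R) = ⊤ := by
    have hmap : Ideal.map π (Ideal.span ({x00, x01, x10, x11, a} : Set R)) = ⊤ := by
      rw [Ideal.map_span]
      have : π '' {x00, x01, x10, x11, a} = {A 0 0, A 0 1, A 1 0, A 1 1, 0} := by
        simp [Set.image_insert_eq, h00, h01, h10, h11, hπa]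
      rw [this]
      rw [show ({A 0 0, A 0 1, A 1 0, A 1 1, 0} : Set _) =
        insert 0 {A 0 0, A 0 1, A 1 0, A 1 1} by
          ext x; simp; tauto]
      rw [Ideal.span_insert, Ideal.span_singleton_eq_bot.mpr rfl, bot_sup_eq, hA]
    have hker : Ideal.span ({a} : Set R) ≤ Ideal.span ({x00, x01, x10, x11, a} : Set R) :=
      Ideal.span_mono (by intro x hx; simp at hx; simp [hx])
    have := Ideal.comap_map_of_surjective π hsurj
      (Ideal.span ({x00, x01, x10, x11, a} : Set R))
    rw [hmap] at this
    have hker' : RingHom.ker π = Ideal.span ({a} : Set R) := Ideal.mk_ker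
    rw [← RingHom.ker_eq_comap_bot, hker'] at this
    have : Ideal.span ({x00, x01, x10, x11, a} : Set R) = ⊤ := by
      rw [sup_eq_left.mpr hker] at this
      rw [← this]
      simp [Ideal.comap_top]
    exact this
  obtain ⟨r1, r2, r3, r4, hr⟩ := hsr4 x00 x01 x10 x11 a hItop
  refine ⟨!![x00 + a * r1, x01 + a * r2; x10 + a * r3, x11 + a * r4], ?_, ?_⟩
  · simpa using hr
  · intro i j
    fin_cases i <;> fin_cases j <;>
      simp [map_add, _root_.map_mul, hπa, h00, h01, h10, h11]

/-- A `2 × 2` matrix is unimodular if its four entries generate the unit ideal. -/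
def Unimodular2 {R : Type*} [CommRing R] (A : Matrix (Fin 2) (Fin 2) R) : Prop :=
  Ideal.span {A 0 0, A 0 1, A 1 0, A 1 1} = ⊤

/-- A `2 × 2` matrix is extendable if it is the top-left block of a `3 × 3` matrix
of determinant `1`. -/
def Extendable {R : Type*} [CommRing R] (A : Matrix (Fin 2) (Fin 2) R) : Prop :=
  ∃ B : Matrix (Fin 3) (Fin 3) R, B.det = 1 ∧
    ∀ i j : Fin 2, B i.castSucc j.castSucc = A i j

/-- A `2 × 2` matrix is simply extendable if it is the top-left block of a `3 × 3` matrix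
of determinant `1` whose `(3,3)` entry is `0`. -/
def SimplyExtendable {R : Type*} [CommRing R] (A : Matrix (Fin 2) (Fin 2) R) : Prop :=
  ∃ B : Matrix (Fin 3) (Fin 3) R, B.det = 1 ∧
    (∀ i j : Fin 2, B i.castSucc j.castSucc = A i j) ∧ B 2 2 = 0

theorem stmt15 (R : Type*) [CommRing R]
    (hsr4 : ∀ a₁ a₂ a₃ a₄ b : R, Ideal.span {a₁, a₂, a₃, a₄, b} = ⊤ →
      ∃ r₁ r₂ r₃ r₄ : R,
        Ideal.span {a₁ + b * r₁, a₂ + b * r₂, a₃ + b * r₃, a₄ + b * r₄} = ⊤) :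
    ((∀ A : Matrix (Fin 2) (Fin 2) R, Unimodular2 A → Extendable A) →
      ∀ a : R, ∀ A : Matrix (Fin 2) (Fin 2) (R ⧸ Ideal.span {a}),
        Unimodular2 A → Extendable A) ∧
    ((∀ A : Matrix (Fin 2) (Fin 2) R, Unimodular2 A → SimplyExtendable A) →
      ∀ a : R, ∀ A : Matrix (Fin 2) (Fin 2) (R ⧸ Ideal.span {a}),
        Unimodular2 A → SimplyExtendable A) := by
  have key : ∀ a : R, ∀ A : Matrix (Fin 2) (Fin 2) (R ⧸ Ideal.span {a}),
      Unimodular2 A → ∃ A' : Matrix (Fin 2) (Fin 2) R, Unimodular2 A' ∧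
        ∀ i j, Ideal.Quotient.mk (Ideal.span {a}) (A' i j) = A i j :=
    fun a A hA => lift_unimodular hsr4 a A hA
  constructor
  · intro hext a A hA
    obtain ⟨A', hA', hmap⟩ := key a A hA
    obtain ⟨B, hdet, hblk⟩ := hext A' hA'
    refine ⟨B.map (Ideal.Quotient.mk (Ideal.span {a})), ?_, ?_⟩
    · rw [show B.map ⇑(Ideal.Quotient.mk (Ideal.span {a})) = (Ideal.Quotient.mk (Ideal.span {a})).mapMatrix B from rfl, ← RingHom.map_det, hdet, _root_.map_one]
    · intro i j
      simp [Matrix.map_apply, hblk, hmap]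
  · intro hext a A hA
    obtain ⟨A', hA', hmap⟩ := key a A hA
    obtain ⟨B, hdet, hblk, h22⟩ := hext A' hA'
    refine ⟨B.map (Ideal.Quotient.mk (Ideal.span {a})), ?_, ?_, ?_⟩
    · rw [show B.map ⇑(Ideal.Quotient.mk (Ideal.span {a})) = (Ideal.Quotient.mk (Ideal.span {a})).mapMatrix B from rfl, ← RingHom.map_det, hdet, _root_.map_one]
    · intro i j
      simp [Matrix.map_apply, hblk, hmap]
    · simp [Matrix.map_apply, h22]
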